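/- The explicit map φ^{1,{2,3}} solves the 3×3 matrix re-factorization problem A¹(u)A^{2,3}(v) = A^{2,3}(y)A¹(x): for x = (x⁽¹⁾,…,x⁽⁶⁾), y = (y⁽¹⁾,…,y⁽⁶⁾) in D⁶ such that the elements v⁽²⁾ := y⁽²⁾+y⁽¹⁾x⁽²⁾, v⁽³⁾ := y⁽³⁾+y⁽¹⁾x⁽³⁾, v⁽⁵⁾ := y⁽⁵⁾+y⁽⁴⁾x⁽²⁾, v⁽⁶⁾ := y⁽⁶⁾+y⁽⁴⁾x⁽³⁾, v⁽³⁾(v⁽⁶⁾)⁻¹ − v⁽²⁾(v⁽⁵⁾)⁻¹ and v⁽⁵⁾(v⁽²⁾)⁻¹ − v⁽⁶⁾(v⁽³⁾)⁻¹ are all nonzero, setting v⁽¹⁾ = y⁽¹⁾x⁽¹⁾, v⁽⁴⁾ = y⁽⁴⁾x⁽¹⁾, u⁽²⁾ = (x⁽³⁾(v⁽⁶⁾)⁻¹ − x⁽²⁾(v⁽⁵⁾)⁻¹)(v⁽³⁾(v⁽⁶⁾)⁻¹ − v⁽²⁾(v⁽⁵⁾)⁻¹)⁻¹, u⁽³⁾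 = (x⁽²⁾(v⁽²⁾)⁻¹ − x⁽³⁾(v⁽³⁾)⁻¹)(v⁽⁵⁾(v⁽²⁾)⁻¹ − v⁽⁶⁾(v⁽³⁾)⁻¹)⁻¹, u⁽¹⁾ = x⁽¹⁾ − u⁽²⁾v⁽¹⁾ − u⁽³⁾v⁽⁴⁾ and u⁽ʲ⁾ = x⁽ʲ⁾ for j = 4,5,6, the matrix identity A¹(u)A^{2,3}(v) = A^{2,3}(y)A¹(x) holds. -/
import Mathlib


variable {D : Type*} [DivisionRing D]

/-- The matrix `A¹(x)` for `x ∈ D⁶`: the identity with first row replaced by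
`(x⁽¹⁾, x⁽²⁾, x⁽³⁾)` (the entries `x⁽⁴⁾, x⁽⁵⁾, x⁽⁶⁾` are unused). -/
def A1 (a1 a2 a3 a4 a5 a6 : D) : Matrix (Fin 3) (Fin 3) D :=
  !![a1, a2, a3; 0, 1, 0; 0, 0, 1]

/-- The matrix `A^{2,3}(x)` for `x ∈ D⁶`: the identity with second row replaced by
`(x⁽¹⁾, x⁽²⁾, x⁽³⁾)` and third row replaced by `(x⁽⁴⁾, x⁽⁵⁾, x⁽⁶⁾)`. -/
def A23 (a1 a2 a3 a4 a5 a6 : D) : Matrix (Fin 3) (Fin 3) D :=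
  !![1, 0, 0; a1, a2, a3; a4, a5, a6]

/-- The explicit map `φ^{1,{2,3}}` solves the `3 × 3` matrix re-factorization problem
`A¹(u)A^{2,3}(v) = A^{2,3}(y)A¹(x)`. -/
theorem phi1_23_refactorization
    (x1 x2 x3 x4 x5 x6 y1 y2 y3 y4 y5 y6 v1 v2 v3 v4 v5 v6 u1 u2 u3 : D)
    (hv1 : v1 = y1 * x1) (hv2 : v2 = y2 + y1 * x2) (hv3 : v3 = y3 + y1 * x3)
    (hv4 : v4 = y4 * x1) (hv5 : v5 = y5 + y4 * x2) (hv6 : v6 = y6 + y4 * x3)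
    (h2 : v2 ≠ 0) (h3 : v3 ≠ 0) (h5 : v5 ≠ 0) (h6 : v6 ≠ 0)
    (hA : v3 * v6⁻¹ - v2 * v5⁻¹ ≠ 0) (hB : v5 * v2⁻¹ - v6 * v3⁻¹ ≠ 0)
    (hu2 : u2 = (x3 * v6⁻¹ - x2 * v5⁻¹) * (v3 * v6⁻¹ - v2 * v5⁻¹)⁻¹)
    (hu3 : u3 = (x2 * v2⁻¹ - x3 * v3⁻¹) * (v5 * v2⁻¹ - v6 * v3⁻¹)⁻¹)
    (hu1 : u1 = x1 - u2 * v1 - u3 * v4) :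
    A1 u1 u2 u3 x4 x5 x6 * A23 v1 v2 v3 v4 v5 v6 =
      A23 y1 y2 y3 y4 y5 y6 * A1 x1 x2 x3 x4 x5 x6 := by
  have c2' : ∀ a : D, v2⁻¹ * (v2 * a) = a := fun a => by
    rw [← mul_assoc, inv_mul_cancel₀ h2, one_mul]
  have c3' : ∀ a : D, v3⁻¹ * (v3 * a) = a := fun a => by
    rw [← mul_assoc, inv_mul_cancel₀ h3, one_mul]
  have key1 : u3 * (v5 * v2⁻¹ - v6 * v3⁻¹) = x2 * v2⁻¹ - x3 * v3⁻¹ := by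
    rw [hu3, mul_assoc, inv_mul_cancel₀ hB, mul_one]
  have key2 : u2 * (v3 * v6⁻¹ - v2 * v5⁻¹) = x3 * v6⁻¹ - x2 * v5⁻¹ := by
    rw [hu2, mul_assoc, inv_mul_cancel₀ hA, mul_one]
  have hq : u3 * (v5 * v2⁻¹) = x2 * v2⁻¹ - x3 * v3⁻¹ + u3 * (v6 * v3⁻¹) := by
    rw [mul_sub] at key1; linear_combination (norm := noncomm_ring) key1
  have hq' : ∀ a : D, u3 * (v5 * (v2⁻¹ * a))
      = x2 * (v2⁻¹ * a) - x3 * (v3⁻¹ * a) + u3 * (v6 * (v3⁻¹ * a)) := by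
    intro a
    have h := congrArg (· * a) hq
    simpa only [sub_mul, add_mul, mul_assoc] using h
  have hq2 : ∀ a : D, u3 * (v6 * (v3⁻¹ * a))
      = u3 * (v5 * (v2⁻¹ * a)) - x2 * (v2⁻¹ * a) + x3 * (v3⁻¹ * a) := by
    intro a; rw [hq' a]; abel
  have hcalc : (x2 - u3 * v5) * v2⁻¹ * (v3 * v6⁻¹ - v2 * v5⁻¹)
      = x3 * v6⁻¹ - x2 * v5⁻¹ := by
    simp only [sub_mul, mul_sub, mul_assoc, c2', hq', c3', mul_inv_cancel₀ h5,
      mul_inv_cancel₀ h6, mul_one]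
    abel
  have hcalc2 : (x3 - u3 * v6) * v3⁻¹ * (v3 * v6⁻¹ - v2 * v5⁻¹)
      = x3 * v6⁻¹ - x2 * v5⁻¹ := by
    simp only [sub_mul, mul_sub, mul_assoc, c3', hq2, c2', mul_inv_cancel₀ h5,
      mul_inv_cancel₀ h6, mul_one]
    abel
  have hu2v2 : u2 = (x2 - u3 * v5) * v2⁻¹ := by
    have hz : (u2 - (x2 - u3 * v5) * v2⁻¹) * (v3 * v6⁻¹ - v2 * v5⁻¹) = 0 := by
      rw [sub_mul, key2, hcalc, sub_self]
    exact sub_eq_zero.mp ((mul_eq_zero.mp hz).resolve_right hA)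
  have hu2v3 : u2 = (x3 - u3 * v6) * v3⁻¹ := by
    have hz : (u2 - (x3 - u3 * v6) * v3⁻¹) * (v3 * v6⁻¹ - v2 * v5⁻¹) = 0 := by
      rw [sub_mul, key2, hcalc2, sub_self]
    exact sub_eq_zero.mp ((mul_eq_zero.mp hz).resolve_right hA)
  have e2 : u2 * v2 + u3 * v5 = x2 := by
    rw [hu2v2, mul_assoc, inv_mul_cancel₀ h2, mul_one]; abel
  have e3 : u2 * v3 + u3 * v6 = x3 := by
    rw [hu2v3, mul_assoc, inv_mul_cancel₀ h3, mul_one]; abel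
  have e1 : u1 + u2 * v1 + u3 * v4 = x1 := by rw [hu1]; abel
  rw [A1, A23, A1, A23, Matrix.mul_fin_three, Matrix.mul_fin_three]
  ext i j
  fin_cases i <;> fin_cases j <;> simp
  all_goals first
    | exact e2
    | exact e3
    | exact hv1
    | exact hv4
    | (rw [hv2]; exact add_comm _ _)
    | (rw [hv3]; exact add_comm _ _)
    | (rw [hv5]; exact add_comm _ _)
    | (rw [hv6]; exact add_comm _ _)
    | linear_combination (norm := abel1) e1
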